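/- For the even-dimensional quadratic form (E,q,L) with E of rank 4 given by the Gram matrix M of a cubic fourfold Y containing a plane, if the second degeneration locus B_2 is empty then the discriminant sextic C = B_1 = {det M = 0} is smooth. -/

import Mathlib

open MvPolynomial

set_option maxHeartbeats 1000000

private lemma pderiv_finset_prod {σ : Type*} [DecidableEq σ] (i : σ)
    {ι : Type*} [DecidableEq ι] (s : Finset ι) (g : ι → MvPolynomial σ ℂ) :
    pderiv i (∏ k ∈ s, g k) = ∑ k ∈ s, (∏ j ∈ s.erase k, g j) * pderiv i (g k) := by
  induction s using Finset.induction_on with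
  | empty => simp
  | insert a s ha ih =>
    rw [Finset.prod_insert ha, pderiv_mul, ih, Finset.mul_sum, Finset.sum_insert ha,
      Finset.erase_insert ha]
    congr 1
    · exact mul_comm _ _
    · refine Finset.sum_congr rfl fun k hk => ?_
      rw [Finset.erase_insert_of_ne (by rintro rfl; exact ha hk),
        Finset.prod_insert (fun h => ha (Finset.mem_of_mem_erase h))]
      ring

private lemma pderiv_det {n : ℕ} {σ : Type*} [DecidableEq σ] (i : σ)
    (M : Matrix (Fin n) (Fin n) (MvPolynomial σ ℂ)) :
    pderiv i M.det = ∑ k, (M.updateRow k (fun j => pderiv i (M k j))).det := by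
  simp only [Matrix.det_apply]
  rw [map_sum, Finset.sum_comm]
  refine Finset.sum_congr rfl fun σ' _ => ?_
  have hz : ∀ p : MvPolynomial σ ℂ,
      pderiv i (Equiv.Perm.sign σ' • p) = Equiv.Perm.sign σ' • pderiv i p := by
    intro p
    rw [Units.smul_def, Units.smul_def, map_zsmul]
  rw [hz, pderiv_finset_prod, Finset.smul_sum]
  refine Fintype.sum_equiv σ' _ _ fun k => ?_
  congr 1
  rw [← Finset.mul_prod_erase Finset.univ _ (Finset.mem_univ k)]
  rw [Matrix.updateRow_self]
  rw [mul_comm]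
  congr 1
  refine Finset.prod_congr rfl fun j hj => ?_
  rw [Matrix.updateRow_ne]
  exact fun h => (Finset.ne_of_mem_erase hj) (σ'.injective h)


private lemma eval_smul_of_isHomogeneous {σ : Type*} {p : MvPolynomial σ ℂ} {n : ℕ}
    (hp : p.IsHomogeneous n) (c : ℂ) (x : σ → ℂ) :
    eval (c • x) p = c ^ n * eval x p := by
  rw [eval_eq, eval_eq, Finset.mul_sum]
  refine Finset.sum_congr rfl fun d hd => ?_
  have hdeg : d.degree = n := by
    by_contra h
    exact (mem_support_iff.mp hd) (hp.coeff_eq_zero h)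
  rw [Finsupp.degree] at hdeg
  have : ∏ i ∈ d.support, (c • x) i ^ d i
      = (∏ i ∈ d.support, c ^ d i) * ∏ i ∈ d.support, x i ^ d i := by
    rw [← Finset.prod_mul_distrib]
    exact Finset.prod_congr rfl fun i _ => by
      rw [Pi.smul_apply, smul_eq_mul, mul_pow]
  rw [this, Finset.prod_pow_eq_pow_sum, show ∑ i ∈ d.support, d i = n from hdeg]; ring

private lemma isHomogeneous_pderiv {σ : Type*} [DecidableEq σ] {p : MvPolynomial σ ℂ} {n : ℕ}
    (hp : p.IsHomogeneous (n + 1)) (i : σ) : (pderiv i p).IsHomogeneous n := by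
  rw [← support_sum_monomial_coeff p, map_sum]
  refine MvPolynomial.IsHomogeneous.sum _ _ _ fun d hd => ?_
  rw [pderiv_monomial]
  rcases Nat.eq_zero_or_pos (d i) with h0 | hpos
  · rw [h0]; simp only [Nat.cast_zero, mul_zero, map_zero]
    exact isHomogeneous_zero _ _ _
  · refine isHomogeneous_monomial _ ?_
    have hdeg : d.degree = n + 1 := by
      by_contra h
      exact (mem_support_iff.mp hd) (hp.coeff_eq_zero h)
    have hsum : (d - Finsupp.single i 1) + Finsupp.single i 1 = d := by
      ext j
      simp only [Finsupp.coe_add, Finsupp.coe_tsub, Pi.add_apply, Pi.sub_apply]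
      rcases eq_or_ne j i with rfl | hne
      · simp [Nat.sub_add_cancel hpos]
      · simp [Finsupp.single_apply, Ne.symm hne]
    have hadd : (d - Finsupp.single i 1).degree + (Finsupp.single i 1).degree = n + 1 := by
      rw [Finsupp.degree_eq_weight_one, ← map_add, hsum, ← Finsupp.degree_eq_weight_one, hdeg]
    have hsingle : (Finsupp.single i (1:ℕ)).degree = 1 := by
      simp [Finsupp.degree_single]
    omega

private lemma det_updateRow_adj {n : Type*} [DecidableEq n] [Fintype n]
    (A : Matrix n n ℂ) (k : n) (b : n → ℂ) :
    (A.updateRow k b).det = ∑ j, b j * A.adjugate j k := by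
  have h1 : (A.updateRow k b).det = A.transpose.cramer b k :=
    (Matrix.cramer_transpose_apply A b k).symm
  have hb : b = ∑ j, Pi.single j (b j) := (Finset.univ_sum_single b).symm
  have h2 : A.transpose.cramer b k = ∑ j, b j * A.transpose.cramer (Pi.single j (1:ℂ)) k := by
    conv_lhs => rw [hb]
    rw [map_sum, Finset.sum_apply]
    refine Finset.sum_congr rfl fun j _ => ?_
    have hs : Pi.single j (b j) = b j • (Pi.single j (1:ℂ) : n → ℂ) := by
      funext m
      rcases eq_or_ne m j with rfl | hne
      · simp
      · simp [Pi.single_apply, hne]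
    rw [hs, map_smul, Pi.smul_apply, smul_eq_mul]
  rw [h1, h2]
  refine Finset.sum_congr rfl fun j _ => ?_
  rw [Matrix.adjugate_apply, ← Matrix.cramer_transpose_apply]

private lemma det_of_eq (g : Fin 4 → Fin 4 → ℂ) :
    (Matrix.detRowAlternating : (Fin 4 → ℂ) [⋀^Fin 4]→ₗ[ℂ] ℂ) g = (Matrix.of g).det := rfl

private lemma adjugate_structure (A : Matrix (Fin 4) (Fin 4) ℂ)
    (hsym : A.transpose = A) (h3 : 3 ≤ A.rank) (v : Fin 4 → ℂ) (hv : v ≠ 0)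
    (hAv : A.mulVec v = 0) :
    ∃ lam : ℂ, lam ≠ 0 ∧ ∀ a b, A.adjugate a b = lam * v a * v b := by
  have hdet : A.det = 0 := Matrix.exists_mulVec_eq_zero_iff.mp ⟨v, hv, hAv⟩
  have hvK : v ∈ LinearMap.ker A.mulVecLin := by
    rw [LinearMap.mem_ker, Matrix.mulVecLin_apply]; exact hAv
  have hfin : Module.finrank ℂ (Fin 4 → ℂ) = 4 := by
    simp [Module.finrank_pi]
  have hrn := LinearMap.finrank_range_add_finrank_ker A.mulVecLin
  rw [hfin] at hrn
  have hkle : Module.finrank ℂ (LinearMap.ker A.mulVecLin) ≤ 1 := by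
    have : 3 ≤ Module.finrank ℂ (LinearMap.range A.mulVecLin) := h3
    omega
  have hker : ∀ y : Fin 4 → ℂ, A.mulVec y = 0 → ∃ c : ℂ, y = c • v := by
    intro y hy
    have hle : Submodule.span ℂ {v} ≤ LinearMap.ker A.mulVecLin := by
      rw [Submodule.span_le, Set.singleton_subset_iff]; exact hvK
    have heq : Submodule.span ℂ {v} = LinearMap.ker A.mulVecLin := by
      apply Submodule.eq_of_le_of_finrank_le hle
      rw [finrank_span_singleton hv]; exact hkle
    have hyK : y ∈ Submodule.span ℂ {v} := by
      rw [heq, LinearMap.mem_ker, Matrix.mulVecLin_apply]; exact hy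
    obtain ⟨c, hc⟩ := Submodule.mem_span_singleton.mp hyK
    exact ⟨c, hc.symm⟩
  have hune : ∃ u : Fin 4 → ℂ, u ∉ LinearMap.range A.mulVecLin := by
    by_contra h
    push_neg at h
    have htop : LinearMap.range A.mulVecLin = ⊤ := Submodule.eq_top_iff'.mpr h
    have h4 : Module.finrank ℂ (LinearMap.range A.mulVecLin) = 4 := by
      rw [htop]; simpa using hfin
    have hzero : Module.finrank ℂ (LinearMap.ker A.mulVecLin) = 0 := by omega
    have hbot : LinearMap.ker A.mulVecLin = ⊥ := Submodule.finrank_eq_zero.mp hzero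
    rw [hbot, Submodule.mem_bot] at hvK
    exact hv hvK
  obtain ⟨u, hu⟩ := hune
  obtain ⟨i0, hi0⟩ := Function.ne_iff.mp hv
  have hi0' : v i0 ≠ 0 := by simpa using hi0
  set w : Fin 4 → ℂ := Pi.single i0 1 with hw
  have hadj : A.adjugate ≠ 0 := by
    intro hadj0
    set B : Matrix (Fin 4) (Fin 4) ℂ := A + Matrix.vecMulVec u w with hB
    have hvmv : ∀ y : Fin 4 → ℂ, (Matrix.vecMulVec u w).mulVec y = (∑ b, w b * y b) • u := by
      intro y
      funext a
      simp only [Matrix.mulVec, dotProduct, Matrix.vecMulVec_apply, Pi.smul_apply,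
        smul_eq_mul, Finset.sum_mul]
      exact Finset.sum_congr rfl fun b _ => by ring
    have hBdet : B.det ≠ 0 := by
      intro h0
      obtain ⟨y, hy, hBy⟩ := Matrix.exists_mulVec_eq_zero_iff.mpr h0
      set c : ℂ := ∑ b, w b * y b with hcdef
      have hBy' : A.mulVec y + c • u = 0 := by
        rw [← hvmv y, ← Matrix.add_mulVec, ← hB]
        exact hBy
      rcases eq_or_ne c 0 with hc0 | hc0
      · rw [hc0, zero_smul, add_zero] at hBy'
        obtain ⟨c', hc'⟩ := hker y hBy'
        have hcv : c = c' * v i0 := by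
          rw [hcdef, hc']
          rw [Finset.sum_eq_single i0]
          · simp [hw, mul_comm]
          · intro b _ hb; simp [hw, Pi.single_apply, hb]
          · simp
        rw [hc0] at hcv
        have hc'0 : c' = 0 := by
          rcases mul_eq_zero.mp hcv.symm with h | h
          · exact h
          · exact absurd h hi0'
        rw [hc'0, zero_smul] at hc'
        exact hy hc'
      · apply hu
        refine ⟨(-c)⁻¹ • y, ?_⟩
        rw [map_smul, Matrix.mulVecLin_apply]
        have hAy : A.mulVec y = -c • u := by
          rw [eq_comm, neg_smul, neg_eq_iff_add_eq_zero, add_comm]; exact hBy'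
        rw [hAy, smul_smul, inv_mul_cancel₀ (neg_ne_zero.mpr hc0), one_smul]
    have hBdet0 : B.det = 0 := by
      set d : (Fin 4 → ℂ) [⋀^Fin 4]→ₗ[ℂ] ℂ := Matrix.detRowAlternating with hd
      set m1 : Fin 4 → Fin 4 → ℂ := fun a => u a • w with hm1
      set A' : Fin 4 → Fin 4 → ℂ := fun a b => A a b with hA'
      have hdg : ∀ g : Fin 4 → Fin 4 → ℂ, d g = (Matrix.of g).det := by
        rw [hd]; exact det_of_eq
      have hdet_eq : B.det = d (m1 + A') := by
        rw [hdg]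
        congr 1
        funext a b
        simp [hB, hm1, hA', Matrix.vecMulVec_apply, add_comm, Matrix.add_apply]
      rw [hdet_eq]
      have hexp := d.toMultilinearMap.map_add_univ m1 A'
      rw [AlternatingMap.coe_multilinearMap] at hexp
      rw [hexp]
      apply Finset.sum_eq_zero
      intro s _
      rcases s.eq_empty_or_nonempty with rfl | hs
      · rw [Finset.piecewise_empty, hdg]
        have hofA : Matrix.of A' = A := by funext a b; simp [hA']
        rw [hofA, hdet]
      rcases Nat.lt_or_ge s.card 2 with hcard | hcard
      · have hc1 : s.card = 1 := by
          have := Finset.Nonempty.card_pos hs; omega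
        obtain ⟨k, rfl⟩ := Finset.card_eq_one.mp hc1
        rw [Finset.piecewise_singleton]
        have hm1k : m1 k = u k • w := rfl
        rw [hm1k, d.map_update_smul A' k (u k) w]
        have hupd : Matrix.of (Function.update A' k w) = A.updateRow k w := by
          funext a b
          rcases eq_or_ne a k with rfl | hne
          · simp [Matrix.updateRow_self]
          · simp [Matrix.updateRow_ne hne, Function.update_of_ne hne, hA']
        rw [hdg, hupd, det_updateRow_adj, hadj0]
        simp
      · obtain ⟨a, has, b, hbs, hab⟩ := Finset.one_lt_card.mp hcard
        set P : Fin 4 → Fin 4 → ℂ := s.piecewise m1 A' with hP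
        have hPa : P a = u a • w := Finset.piecewise_eq_of_mem _ _ _ has
        have hPb : P b = u b • w := Finset.piecewise_eq_of_mem _ _ _ hbs
        have step1 : P = Function.update P a (u a • w) := by
          rw [← hPa, Function.update_eq_self]
        have e1 : d P = u a • d (Function.update P a w) := by
          conv_lhs => rw [step1]
          exact d.map_update_smul P a (u a) w
        have hQb : Function.update P a w b = u b • w := by
          rw [Function.update_of_ne (Ne.symm hab), hPb]
        have step2 : Function.update P a w
            = Function.update (Function.update P a w) b (u b • w) := by
          rw [← hQb, Function.update_eq_self]
        have e2 : d (Function.update P a w)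
            = u b • d (Function.update (Function.update P a w) b w) := by
          conv_lhs => rw [step2]
          exact d.map_update_smul _ b (u b) w
        have e3 : d (Function.update (Function.update P a w) b w) = 0 := by
          apply AlternatingMap.map_eq_zero_of_eq _ _ (i := a) (j := b) _ hab
          rw [Function.update_of_ne hab, Function.update_self, Function.update_self]
        rw [e1, e2, e3, smul_zero, smul_zero]
    exact hBdet hBdet0
  have hcol : ∀ j, ∃ c : ℂ, (fun a => A.adjugate a j) = c • v := by
    intro j
    apply hker
    funext a
    have hma := congrFun (congrFun (Matrix.mul_adjugate A) a) j
    rw [hdet] at hma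
    simp only [Matrix.mul_apply, zero_smul, Matrix.zero_apply] at hma
    simpa [Matrix.mulVec, dotProduct] using hma
  choose c hc using hcol
  have hadj_eq : ∀ a j, A.adjugate a j = c j * v a := by
    intro a j
    have := congrFun (hc j) a
    simpa [mul_comm] using this
  have hsymadj : ∀ a b, A.adjugate a b = A.adjugate b a := by
    intro a b
    have hT : A.adjugate.transpose = A.adjugate := by
      rw [Matrix.adjugate_transpose, hsym]
    have h := congrFun (congrFun hT a) b
    rw [Matrix.transpose_apply] at h
    exact h.symm
  set lam : ℂ := c i0 / v i0 with hlam
  have hcj : ∀ j, c j = lam * v j := by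
    intro j
    have h1 : c i0 * v j = c j * v i0 := by
      have := hsymadj j i0
      rw [hadj_eq, hadj_eq] at this
      linear_combination this
    rw [hlam, div_mul_eq_mul_div, eq_div_iff hi0']
    linear_combination -h1
  refine ⟨lam, ?_, ?_⟩
  · intro h0
    apply hadj
    funext a b
    rw [hadj_eq, hcj, h0]
    simp
  · intro a b
    rw [hadj_eq, hcj]
    ring

/-- For the rank-4 quadratic form given by the Gram matrix `M` of a smooth cubic
fourfold `Y ⊂ P⁵` containing a plane (`l` linear `3×3` block, `q` quadratic vector, `f` cubic
entry), if the second degeneration locus `B₂` is empty (every fibre matrix has rank `≥ 3`),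
then the discriminant sextic `C = B₁ = {det M = 0}` is smooth. -/
theorem discriminant_sextic_smooth_of_B2_empty
    (l : Fin 3 → Fin 3 → MvPolynomial (Fin 3) ℂ)
    (q : Fin 3 → MvPolynomial (Fin 3) ℂ) (f : MvPolynomial (Fin 3) ℂ)
    (hl : ∀ i j, (l i j).IsHomogeneous 1) (hlsym : ∀ i j, l i j = l j i)
    (hq : ∀ k, (q k).IsHomogeneous 2) (hf : f.IsHomogeneous 3)
    (M : Matrix (Fin 4) (Fin 4) (MvPolynomial (Fin 3) ℂ))
    (hM₁ : ∀ i j : Fin 3, M i.castSucc j.castSucc = l i j)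
    (hM₂ : ∀ i : Fin 3, M i.castSucc (Fin.last 3) = q i)
    (hM₃ : ∀ i : Fin 3, M (Fin.last 3) i.castSucc = q i)
    (hM₄ : M (Fin.last 3) (Fin.last 3) = f)
    (F : MvPolynomial (Fin 3 ⊕ Fin 3) ℂ)
    (hF : F = (∑ i, ∑ j, rename Sum.inl (l i j) * X (Sum.inr i) * X (Sum.inr j))
            + 2 * (∑ k, rename Sum.inl (q k) * X (Sum.inr k))
            + rename Sum.inl f)
    -- smoothness of the cubic fourfold `Y = {F = 0}`
    (hYsmooth : ∀ z : Fin 3 ⊕ Fin 3 → ℂ, z ≠ 0 → eval z F = 0 →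
      ∃ i, eval z (pderiv i F) ≠ 0)
    -- the second degeneration locus is empty
    (hB₂ : ∀ x : Fin 3 → ℂ, x ≠ 0 → 3 ≤ (M.map (eval x)).rank) :
    -- the discriminant sextic `C = {det M = 0}` is smooth
    ∀ x : Fin 3 → ℂ, x ≠ 0 → eval x M.det = 0 →
      ∃ i, eval x (pderiv i M.det) ≠ 0 := by
  intro x hx hdet0
  by_contra hcon
  push_neg at hcon
  set A : Matrix (Fin 4) (Fin 4) ℂ := M.map (eval x) with hA
  have hmapdet : ∀ N : Matrix (Fin 4) (Fin 4) (MvPolynomial (Fin 3) ℂ),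
      (N.map (eval x)).det = eval x N.det := by
    intro N; rw [RingHom.map_det]; rfl
  have hAdet : A.det = 0 := by rw [hA, hmapdet, hdet0]
  have hMsym : ∀ a b, M a b = M b a := by
    intro a b
    induction a using Fin.lastCases with
    | last =>
      induction b using Fin.lastCases with
      | last => rfl
      | cast b => rw [hM₃ b, hM₂ b]
    | cast a =>
      induction b using Fin.lastCases with
      | last => rw [hM₂ a, hM₃ a]
      | cast b => rw [hM₁, hM₁, hlsym]
  have hAsym : A.transpose = A := by
    funext a b
    rw [Matrix.transpose_apply, hA, Matrix.map_apply, Matrix.map_apply, hMsym]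
  obtain ⟨v, hv, hAv⟩ := Matrix.exists_mulVec_eq_zero_iff.mpr hAdet
  obtain ⟨lam, hlam, hadj⟩ := adjugate_structure A hAsym (hB₂ x hx) v hv hAv
  set t : ℂ := v (Fin.last 3) with ht
  set uu : Fin 3 → ℂ := fun i => v i.castSucc with huu
  have huu' : ∀ j : Fin 3, v j.castSucc = uu j := fun j => rfl
  have hk1 : ∀ i : Fin 3, (∑ j, eval x (l i j) * uu j) + eval x (q i) * t = 0 := by
    intro i
    have h := congrFun hAv i.castSucc
    rw [Matrix.mulVec, dotProduct, Fin.sum_univ_castSucc] at h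
    simp only [hA, Matrix.map_apply, hM₁, hM₂, Pi.zero_apply] at h
    exact h
  have hk2 : (∑ j, eval x (q j) * uu j) + eval x f * t = 0 := by
    have h := congrFun hAv (Fin.last 3)
    rw [Matrix.mulVec, dotProduct, Fin.sum_univ_castSucc] at h
    simp only [hA, Matrix.map_apply, hM₃, hM₄, Pi.zero_apply] at h
    exact h
  have hLu : ∀ i, ∑ j, eval x (l i j) * uu j = -(eval x (q i) * t) :=
    fun i => eq_neg_of_add_eq_zero_left (hk1 i)
  have hQu : ∑ k, eval x (q k) * uu k = -(eval x f * t) :=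
    eq_neg_of_add_eq_zero_left hk2
  set z : Fin 3 ⊕ Fin 3 → ℂ := Sum.elim (t • x) uu with hz
  have hzne : z ≠ 0 := by
    intro h0
    rcases eq_or_ne t 0 with ht0 | ht0
    · apply hv
      funext a
      induction a using Fin.lastCases with
      | last => exact ht ▸ ht0
      | cast a =>
        have := congrFun h0 (Sum.inr a)
        simpa [hz, huu] using this
    · apply hx
      funext j
      have := congrFun h0 (Sum.inl j)
      rw [hz] at this
      simp only [Sum.elim_inl, Pi.smul_apply, smul_eq_mul, Pi.zero_apply] at this
      rcases mul_eq_zero.mp this with h | h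
      · exact absurd h ht0
      · exact h
  have hrn : ∀ (p : MvPolynomial (Fin 3) ℂ) (n : ℕ), p.IsHomogeneous n →
      eval z (rename Sum.inl p) = t ^ n * eval x p := by
    intro p n hp
    rw [eval_rename]
    have hcomp : z ∘ Sum.inl = t • x := by rw [hz]; rfl
    rw [hcomp, eval_smul_of_isHomogeneous hp]
  have hzinr : ∀ k : Fin 3, eval z (X (Sum.inr k)) = uu k := by
    intro k; rw [eval_X, hz]; rfl
  have htwo : eval z (2 : MvPolynomial (Fin 3 ⊕ Fin 3) ℂ) = 2 := by
    rw [show (2 : MvPolynomial (Fin 3 ⊕ Fin 3) ℂ) = C 2 from (map_ofNat C 2).symm, eval_C]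
  -- (a) F vanishes at z
  have hFz : eval z F = 0 := by
    rw [hF, map_add, map_add, map_mul, map_sum]
    have h1 : ∀ i : Fin 3, eval z (∑ j, rename Sum.inl (l i j) * X (Sum.inr i) * X (Sum.inr j))
        = t * (uu i * ∑ j, eval x (l i j) * uu j) := by
      intro i
      rw [map_sum, Finset.mul_sum, Finset.mul_sum]
      refine Finset.sum_congr rfl fun j _ => ?_
      rw [map_mul, map_mul, hrn _ 1 (hl i j), hzinr, hzinr]
      ring
    rw [Finset.sum_congr rfl fun i _ => h1 i]
    have h2 : eval z (∑ k, rename Sum.inl (q k) * X (Sum.inr k))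
        = t ^ 2 * ∑ k, eval x (q k) * uu k := by
      rw [map_sum, Finset.mul_sum]
      refine Finset.sum_congr rfl fun k _ => ?_
      rw [map_mul, hrn _ 2 (hq k), hzinr]
      ring
    rw [h2, hrn _ 3 hf, htwo]
    have h3 : ∑ i, t * (uu i * ∑ j, eval x (l i j) * uu j) = t * t * (eval x f * t) := by
      rw [Finset.sum_congr rfl fun i _ => by rw [hLu i]]
      have h4 : ∑ i, t * (uu i * -(eval x (q i) * t)) = -t * t * ∑ i, eval x (q i) * uu i := by
        rw [Finset.mul_sum]
        exact Finset.sum_congr rfl fun i _ => by ring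
      rw [h4, hQu]
      ring
    rw [h3, hQu]
    ring
  have hpd0 : ∀ (s : Fin 3 ⊕ Fin 3), (∀ a, s ≠ Sum.inl a) → ∀ (p : MvPolynomial (Fin 3) ℂ),
      pderiv s (rename (Sum.inl : Fin 3 → Fin 3 ⊕ Fin 3) p) = 0 := by
    intro s hs p
    apply pderiv_eq_zero_of_notMem_vars
    intro hmem
    obtain ⟨a, -, ha⟩ := Finset.mem_image.mp (vars_rename _ p hmem)
    exact hs a ha.symm
  -- (b) fibre derivatives vanish at z
  have hFy : ∀ k : Fin 3, eval z (pderiv (Sum.inr k) F) = 0 := by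
    intro k
    have hpdX : ∀ i : Fin 3, pderiv (Sum.inr k) (X (Sum.inr i) : MvPolynomial (Fin 3 ⊕ Fin 3) ℂ)
        = if i = k then 1 else 0 := by
      intro i
      rcases eq_or_ne i k with rfl | h
      · simp [pderiv_X_self]
      · rw [pderiv_X_of_ne (by simpa using h), if_neg h]
    rw [hF]
    simp only [map_add]
    rw [hpd0 _ (by simp) f, map_zero, add_zero]
    have hmain : eval z (pderiv (Sum.inr k)
        (∑ i, ∑ j, rename Sum.inl (l i j) * X (Sum.inr i) * X (Sum.inr j)))
        = t * (∑ j, eval x (l k j) * uu j) + t * (∑ i, eval x (l i k) * uu i) := by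
      simp only [map_sum]
      have hterm : ∀ i j : Fin 3,
          eval z (pderiv (Sum.inr k) (rename Sum.inl (l i j) * X (Sum.inr i) * X (Sum.inr j)))
          = (if i = k then t * (eval x (l i j) * uu j) else 0)
            + (if j = k then t * (eval x (l i j) * uu i) else 0) := by
        intro i j
        rw [pderiv_mul, pderiv_mul, hpd0 _ (by simp) (l i j), zero_mul, zero_add, hpdX, hpdX]
        simp only [map_add, map_mul, hrn _ 1 (hl i j), hzinr, apply_ite (eval z),
          map_one, map_zero]
        split_ifs <;> ring
      rw [Finset.sum_congr rfl fun i _ => Finset.sum_congr rfl fun j _ => hterm i j]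
      rw [Finset.sum_congr rfl fun i (_ : i ∈ Finset.univ) => Finset.sum_add_distrib]
      rw [Finset.sum_add_distrib]
      congr 1
      · have hc1 : ∀ i : Fin 3, (∑ j, if i = k then t * (eval x (l i j) * uu j) else 0)
            = if i = k then ∑ j, t * (eval x (l i j) * uu j) else 0 := by
          intro i
          rcases eq_or_ne i k with rfl | h
          · simp
          · simp [h]
        rw [Finset.sum_congr rfl fun i _ => hc1 i, Finset.sum_ite_eq' Finset.univ k
          (fun i => ∑ j, t * (eval x (l i j) * uu j))]
        rw [if_pos (Finset.mem_univ k), Finset.mul_sum]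
      · rw [Finset.sum_congr rfl fun i (_ : i ∈ Finset.univ) =>
          Finset.sum_ite_eq' Finset.univ k (fun j => t * (eval x (l i j) * uu i))]
        rw [Finset.sum_congr rfl fun i (_ : i ∈ Finset.univ) => if_pos (Finset.mem_univ k),
          Finset.mul_sum]
    have hmid : eval z (pderiv (Sum.inr k) (2 * ∑ k', rename Sum.inl (q k') * X (Sum.inr k')))
        = 2 * (t ^ 2 * eval x (q k)) := by
      rw [show (2 : MvPolynomial (Fin 3 ⊕ Fin 3) ℂ) = C 2 from (map_ofNat C 2).symm]
      rw [pderiv_C_mul, map_sum]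
      rw [Finset.sum_congr rfl fun k' (_ : k' ∈ Finset.univ) => by
        rw [pderiv_mul, hpd0 _ (by simp) (q k'), zero_mul, zero_add, hpdX]]
      rw [map_mul, eval_C, map_sum]
      rw [Finset.sum_congr rfl fun k' (_ : k' ∈ Finset.univ) => by
        rw [map_mul, hrn _ 2 (hq k'), apply_ite (eval z), map_one, map_zero, mul_ite, mul_one, mul_zero]]
      rw [Finset.sum_ite_eq' Finset.univ k (fun k' => t ^ 2 * eval x (q k'))]
      rw [if_pos (Finset.mem_univ k)]
    rw [hmain, hmid]
    have hsymsum : ∑ i, eval x (l i k) * uu i = ∑ j, eval x (l k j) * uu j := by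
      exact Finset.sum_congr rfl fun i _ => by rw [hlsym]
    rw [hsymsum, hLu k]
    ring
  -- (c) base derivatives at z
  have hFx : ∀ i : Fin 3, eval z (pderiv (Sum.inl i) F)
      = (∑ a, ∑ b, eval x (pderiv i (l a b)) * uu a * uu b)
        + 2 * (t * ∑ k, eval x (pderiv i (q k)) * uu k)
        + t ^ 2 * eval x (pderiv i f) := by
    intro i
    have hpdX : ∀ j : Fin 3, pderiv (Sum.inl i) (X (Sum.inr j) : MvPolynomial (Fin 3 ⊕ Fin 3) ℂ)
        = 0 := fun j => pderiv_X_of_ne (by simp)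
    rw [hF]
    simp only [map_add]
    have h3 : eval z (pderiv (Sum.inl i) (rename Sum.inl f)) = t ^ 2 * eval x (pderiv i f) := by
      rw [pderiv_rename Sum.inl_injective, hrn _ 2 (isHomogeneous_pderiv hf i)]
    have h1 : eval z (pderiv (Sum.inl i)
        (∑ a, ∑ b, rename Sum.inl (l a b) * X (Sum.inr a) * X (Sum.inr b)))
        = ∑ a, ∑ b, eval x (pderiv i (l a b)) * uu a * uu b := by
      simp only [map_sum]
      refine Finset.sum_congr rfl fun a _ => Finset.sum_congr rfl fun b _ => ?_
      rw [pderiv_mul, pderiv_mul, hpdX, hpdX]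
      simp only [mul_zero, add_zero, zero_add]
      rw [pderiv_rename Sum.inl_injective]
      rw [map_mul, map_mul, hrn _ 0 (isHomogeneous_pderiv (hl a b) i), hzinr, hzinr]
      rw [pow_zero, one_mul]
    have h2 : eval z (pderiv (Sum.inl i) (2 * ∑ k, rename Sum.inl (q k) * X (Sum.inr k)))
        = 2 * (t * ∑ k, eval x (pderiv i (q k)) * uu k) := by
      rw [show (2 : MvPolynomial (Fin 3 ⊕ Fin 3) ℂ) = C 2 from (map_ofNat C 2).symm]
      rw [pderiv_C_mul, map_mul, eval_C, map_sum, map_sum]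
      congr 1
      rw [Finset.mul_sum]
      refine Finset.sum_congr rfl fun k _ => ?_
      rw [pderiv_mul, hpdX, mul_zero, add_zero, pderiv_rename Sum.inl_injective]
      rw [map_mul, hrn _ 1 (isHomogeneous_pderiv (hq k) i), hzinr]
      ring
    rw [h1, h2, h3]
  -- (d) Jacobi's formula and the adjugate structure
  have hJac : ∀ i : Fin 3, eval x (pderiv i M.det)
      = ∑ k, ∑ j, eval x (pderiv i (M k j)) * A.adjugate j k := by
    intro i
    rw [pderiv_det i M, map_sum]
    refine Finset.sum_congr rfl fun k _ => ?_
    rw [← hmapdet, Matrix.map_updateRow, ← hA, det_updateRow_adj]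
    exact Finset.sum_congr rfl fun j _ => rfl
  have hvBv : ∀ i : Fin 3, ∑ k, ∑ j, eval x (pderiv i (M k j)) * (v j * v k) = 0 := by
    intro i
    have h0 := hcon i
    rw [hJac i] at h0
    have heq : ∑ k, ∑ j, eval x (pderiv i (M k j)) * A.adjugate j k
        = lam * ∑ k, ∑ j, eval x (pderiv i (M k j)) * (v j * v k) := by
      rw [Finset.mul_sum]
      refine Finset.sum_congr rfl fun k _ => ?_
      rw [Finset.mul_sum]
      refine Finset.sum_congr rfl fun j _ => ?_
      rw [hadj]
      ring
    rw [heq] at h0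
    rcases mul_eq_zero.mp h0 with h | h
    · exact absurd h hlam
    · exact h
  -- base derivatives of F vanish at z
  have hFx0 : ∀ i : Fin 3, eval z (pderiv (Sum.inl i) F) = 0 := by
    intro i
    have hexp := hvBv i
    rw [Fin.sum_univ_castSucc] at hexp
    rw [Finset.sum_congr rfl fun c (_ : c ∈ Finset.univ) =>
      (Fin.sum_univ_castSucc (fun j => eval x (pderiv i (M c.castSucc j)) * (v j * v c.castSucc)))] at hexp
    rw [Fin.sum_univ_castSucc (fun j => eval x (pderiv i (M (Fin.last 3) j)) * (v j * v (Fin.last 3)))] at hexp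
    simp only [hM₁, hM₂, hM₃, hM₄, huu', ← ht] at hexp
    rw [Finset.sum_add_distrib] at hexp
    -- now hexp is the expanded quadratic form identity
    rw [hFx i]
    have e1 : ∑ a, ∑ b, eval x (pderiv i (l a b)) * uu a * uu b
        = ∑ c, ∑ d, eval x (pderiv i (l c d)) * (uu d * uu c) := by
      rw [Finset.sum_comm]
      refine Finset.sum_congr rfl fun c _ => Finset.sum_congr rfl fun d _ => ?_
      rw [congrArg (eval x) (congrArg (pderiv i) (hlsym c d))]
      ring
    have e2 : ∑ c, eval x (pderiv i (q c)) * (t * uu c)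
        = t * ∑ c, eval x (pderiv i (q c)) * uu c := by
      rw [Finset.mul_sum]; exact Finset.sum_congr rfl fun c _ => by ring
    have e3 : ∑ c, eval x (pderiv i (q c)) * (uu c * t)
        = t * ∑ c, eval x (pderiv i (q c)) * uu c := by
      rw [Finset.mul_sum]; exact Finset.sum_congr rfl fun c _ => by ring
    rw [e2, e3] at hexp
    rw [e1]
    linear_combination hexp
  obtain ⟨s, hs⟩ := hYsmooth z hzne hFz
  cases s with
  | inl i => exact hs (hFx0 i)
  | inr k => exact hs (hFy k)
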